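/- arXiv:1702.05805 — 6 statements merged into one kernel-verified Lean document; each statement's English description precedes it below -/
import Mathlib

section
/- Let F be a CNF formula over a variable set partitioned into U_1 and U_2, each of size n/2. Construct a directed graph G whose vertices are: all 2^{n/2} assignments α to U_1, all 2^{n/2} assignments β to U_2, and for each clause C_i three vertices c_i^{⊨⊨}, c_i^{⊨⊭}, c_i^{⊭⊨}. For each α and clause C_i: if α satisfies C_i, add edges (α, c_i^{⊨⊨}) and (α, c_i^{⊨⊭}); otherwise add edge (α, c_i^{⊭⊨}). For each β and clause C_i: if β satisfies C_i, add edges (c_i^{⊨⊨}, β) and (c_i^{⊭⊨}, β); otherwise add edge (c_i^{⊨⊭}, β). Then for every pair (α, β), the maximum number of pairwise edge-disjoint paths from α to β in G equals the number of clauses C_i satisfied by the combined assignment (α, β). -/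
attribute [local instance] Classical.propDecidable

/-- A feasible `s`-`t` flow in a directed capacitated graph given by `cap`:
capacity constraints on every edge and conservation at every vertex other than `s`, `t`. -/
def IsFlow {V : Type*} [Fintype V] (cap : V → V → ℕ) (s t : V) (f : V → V → ℕ) : Prop :=
  (∀ u v, f u v ≤ cap u v) ∧
  ∀ v, v ≠ s → v ≠ t → ∑ u, f u v = ∑ u, f v u

/-- The maximum `s`-`t` flow value: the supremum of net flow out of `s` over feasible flows. -/
noncomputable def maxFlow {V : Type*} [Fintype V] (cap : V → V → ℕ) (s t : V) : ℕ :=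
  sSup {x : ℕ | ∃ f, IsFlow cap s t f ∧ ∑ v, f s v = x + ∑ v, f v s}

/-- A directed path from `s` to `t` using only edges of positive capacity. -/
def IsPath {V : Type*} (cap : V → V → ℕ) (s t : V) (p : List V) : Prop :=
  p.Chain' (fun u v => cap u v ≠ 0) ∧ p.head? = some s ∧ p.getLast? = some t

/-- The (directed) edges traversed by a path. -/
def pathEdges {V : Type*} (p : List V) : List (V × V) := p.zip p.tail

/-- The maximum number of pairwise edge-disjoint directed `s`-`t` paths. -/
noncomputable def maxEDP {V : Type*} (cap : V → V → ℕ) (s t : V) : ℕ :=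
  sSup {k : ℕ | ∃ ps : List (List V), ps.length = k ∧
    (∀ p ∈ ps, IsPath cap s t p ∧ (pathEdges p).Nodup) ∧
    ps.Pairwise (fun p q => ∀ e ∈ pathEdges p, e ∉ pathEdges q)}

/-- A CNF clause over variables `U1 ⊕ U2`: a finite set of literals (variable, polarity). -/
abbrev Clause2 (U1 U2 : Type*) := Finset ((U1 ⊕ U2) × Bool)

/-- The assignment `α` to the variables `U1` satisfies the clause `C`. -/
def satA {U1 U2 : Type*} (α : U1 → Bool) (C : Clause2 U1 U2) : Prop :=
  ∃ l ∈ C, ∃ x : U1, l.1 = Sum.inl x ∧ α x = l.2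

/-- The assignment `β` to the variables `U2` satisfies the clause `C`. -/
def satB {U1 U2 : Type*} (β : U2 → Bool) (C : Clause2 U1 U2) : Prop :=
  ∃ l ∈ C, ∃ x : U2, l.1 = Sum.inr x ∧ β x = l.2

/-- Vertices of the Global Max-Flow reduction graph: assignments to `U1`, assignments
to `U2`, and for each clause `i` three clause vertices: `(i, 0)` is `c_i^{⊨⊨}`,
`(i, 1)` is `c_i^{⊨⊭}`, `(i, 2)` is `c_i^{⊭⊨}`. -/
abbrev RV (U1 U2 : Type*) (m : ℕ) := (U1 → Bool) ⊕ (U2 → Bool) ⊕ (Fin m × Fin 3)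

/-- Unit-capacity edges of the Global Max-Flow reduction graph: if `α ⊨ C_i`, edges
`(α, c_i^{⊨⊨})` and `(α, c_i^{⊨⊭})`, else edge `(α, c_i^{⊭⊨})`; if `β ⊨ C_i`, edges
`(c_i^{⊨⊨}, β)` and `(c_i^{⊭⊨}, β)`, else edge `(c_i^{⊨⊭}, β)`. -/
noncomputable def redCap {U1 U2 : Type*} {m : ℕ} (F : Fin m → Clause2 U1 U2) :
    RV U1 U2 m → RV U1 U2 m → ℕ
  | Sum.inl α, Sum.inr (Sum.inr (i, j)) =>
      if (j = 0 ∨ j = 1) ∧ satA α (F i) then 1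
      else if j = 2 ∧ ¬ satA α (F i) then 1 else 0
  | Sum.inr (Sum.inr (i, j)), Sum.inr (Sum.inl β) =>
      if (j = 0 ∨ j = 2) ∧ satB β (F i) then 1
      else if j = 1 ∧ ¬ satB β (F i) then 1 else 0
  | _, _ => 0

section Aux

variable {U1 U2 : Type*} {m : ℕ} (F : Fin m → Clause2 U1 U2) (α : U1 → Bool) (β : U2 → Bool)

/-- the middle vertex chosen for clause `i` -/
noncomputable def gj (i : Fin m) : Fin 3 :=
  if satA α (F i) then (if satB β (F i) then 0 else 1) else 2

lemma capA_eq (i : Fin m) (j : Fin 3) :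
    redCap F (Sum.inl α) (Sum.inr (Sum.inr (i, j))) =
      if (j = 0 ∨ j = 1) ∧ satA α (F i) then 1
      else if j = 2 ∧ ¬ satA α (F i) then 1 else 0 := rfl

lemma capB_eq (i : Fin m) (j : Fin 3) :
    redCap F (Sum.inr (Sum.inr (i, j))) (Sum.inr (Sum.inl β)) =
      if (j = 0 ∨ j = 2) ∧ satB β (F i) then 1
      else if j = 1 ∧ ¬ satB β (F i) then 1 else 0 := rfl

lemma good_caps {i : Fin m} (h : satA α (F i) ∨ satB β (F i)) :
    redCap F (Sum.inl α) (Sum.inr (Sum.inr (i, gj F α β i))) ≠ 0 ∧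
    redCap F (Sum.inr (Sum.inr (i, gj F α β i))) (Sum.inr (Sum.inl β)) ≠ 0 := by
  rw [capA_eq, capB_eq, gj]
  by_cases hA : satA α (F i) <;> by_cases hB : satB β (F i) <;>
    simp [hA, hB] <;> tauto

lemma caps_unique {i : Fin m} {j : Fin 3}
    (h1 : redCap F (Sum.inl α) (Sum.inr (Sum.inr (i, j))) ≠ 0)
    (h2 : redCap F (Sum.inr (Sum.inr (i, j))) (Sum.inr (Sum.inl β)) ≠ 0) :
    (satA α (F i) ∨ satB β (F i)) ∧ j = gj F α β i := by
  rw [capA_eq] at h1; rw [capB_eq] at h2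
  rw [gj]
  by_cases hA : satA α (F i) <;> by_cases hB : satB β (F i) <;>
    simp [hA, hB] at h1 h2 ⊢ <;> fin_cases j <;> simp_all

lemma path_char {p : List (RV U1 U2 m)}
    (h : IsPath (redCap F) (Sum.inl α) (Sum.inr (Sum.inl β)) p) :
    ∃ (i : Fin m) (j : Fin 3),
      p = [Sum.inl α, Sum.inr (Sum.inr (i, j)), Sum.inr (Sum.inl β)] ∧
      redCap F (Sum.inl α) (Sum.inr (Sum.inr (i, j))) ≠ 0 ∧
      redCap F (Sum.inr (Sum.inr (i, j))) (Sum.inr (Sum.inl β)) ≠ 0 := by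
  obtain ⟨hc, hh, hl⟩ := h
  match p with
  | [] => simp at hh
  | [a] =>
      simp at hh hl; subst hh; exact absurd hl (by simp)
  | [a, b] =>
      simp at hh hl; subst hh; subst hl
      simp [List.Chain', List.isChain_cons_cons] at hc
      exact absurd rfl hc
  | (a :: b :: c :: rest) =>
      simp at hh; subst hh
      simp [List.Chain', List.isChain_cons_cons] at hc
      obtain ⟨h1, h2, hc'⟩ := hc
      -- b must be a clause vertex
      match b with
      | Sum.inl _ => exact absurd rfl h1
      | Sum.inr (Sum.inl _) => exact absurd rfl h1
      | Sum.inr (Sum.inr (i, j)) =>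
        -- c must be a β vertex
        match c with
        | Sum.inl _ => exact absurd rfl h2
        | Sum.inr (Sum.inr _) => exact absurd rfl h2
        | Sum.inr (Sum.inl β') =>
          match rest with
          | (d :: rest') =>
              simp [List.Chain', List.isChain_cons_cons] at hc'
              exact absurd rfl hc'.1
          | [] =>
              simp at hl
              subst hl
              exact ⟨i, j, rfl, h1, h2⟩

end Aux


/-- in the reduction graph built from the CNF formula `F`, for every pair
`(α, β)`, the maximum number of pairwise edge-disjoint directed paths from `α` to `β`
equals the number of clauses satisfied by the combined assignment `(α, β)`. -/
theorem stmt2 {U1 U2 : Type*} [Fintype U1] [DecidableEq U1] [Fintype U2] [DecidableEq U2]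
    {m : ℕ} (F : Fin m → Clause2 U1 U2) (α : U1 → Bool) (β : U2 → Bool) :
    maxEDP (redCap F) (Sum.inl α) (Sum.inr (Sum.inl β)) =
      (Finset.univ.filter fun i => satA α (F i) ∨ satB β (F i)).card := by
  classical
  set S : Finset (Fin m) := Finset.univ.filter fun i => satA α (F i) ∨ satB β (F i) with hS
  set s : RV U1 U2 m := Sum.inl α
  set t : RV U1 U2 m := Sum.inr (Sum.inl β)
  set mk : Fin m → List (RV U1 U2 m) :=
    fun i => [s, Sum.inr (Sum.inr (i, gj F α β i)), t] with hmk
  have hmem : S.card ∈ {k : ℕ | ∃ ps : List (List (RV U1 U2 m)), ps.length = k ∧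
      (∀ p ∈ ps, IsPath (redCap F) s t p ∧ (pathEdges p).Nodup) ∧
      ps.Pairwise (fun p q => ∀ e ∈ pathEdges p, e ∉ pathEdges q)} := by
    refine ⟨S.toList.map mk, by simp, ?_, ?_⟩
    · intro p hp
      simp at hp
      obtain ⟨i, hi, rfl⟩ := hp
      have hi' : satA α (F i) ∨ satB β (F i) := by
        have := hi; rw [hS, Finset.mem_filter] at this; exact this.2
      obtain ⟨h1, h2⟩ := good_caps F α β hi'
      refine ⟨⟨?_, rfl, rfl⟩, ?_⟩
      · simp [hmk, List.Chain', List.isChain_cons_cons]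
        exact ⟨h1, h2⟩
      · simp [hmk, pathEdges]
    · refine List.Pairwise.map mk ?_ (Finset.nodup_toList S)
      intro i i' hne e he he'
      simp [hmk, pathEdges] at he he'
      rcases he with rfl | rfl <;> rcases he' with h | h <;> simp_all
  have hub : ∀ k ∈ {k : ℕ | ∃ ps : List (List (RV U1 U2 m)), ps.length = k ∧
      (∀ p ∈ ps, IsPath (redCap F) s t p ∧ (pathEdges p).Nodup) ∧
      ps.Pairwise (fun p q => ∀ e ∈ pathEdges p, e ∉ pathEdges q)}, k ≤ S.card := by
    rintro k ⟨ps, rfl, hpath, hdisj⟩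
    -- each path has a canonical form
    have hform : ∀ p ∈ ps, ∃ i : Fin m, i ∈ S ∧ p = mk i := by
      intro p hp
      obtain ⟨i, j, rfl, h1, h2⟩ := path_char F α β (hpath p hp).1
      obtain ⟨hsat, rfl⟩ := caps_unique F α β h1 h2
      exact ⟨i, by rw [hS]; simp [hsat], rfl⟩
    have hnd : ps.Nodup := by
      refine hdisj.imp_of_mem ?_
      intro p q hp hq hpq
      intro hEq
      obtain ⟨i, _, rfl⟩ := hform p hp
      exact hpq (s, Sum.inr (Sum.inr (i, gj F α β i))) (by simp [hmk, pathEdges])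
        (by rw [← hEq]; simp [hmk, pathEdges])
    -- inject into S via mk
    have hsub : ps.toFinset ⊆ S.image mk := by
      intro p hp
      rw [List.mem_toFinset] at hp
      obtain ⟨i, hi, rfl⟩ := hform p hp
      exact Finset.mem_image.2 ⟨i, hi, rfl⟩
    calc ps.length = ps.toFinset.card := (List.toFinset_card_of_nodup hnd).symm
      _ ≤ (S.image mk).card := Finset.card_le_card hsub
      _ ≤ S.card := Finset.card_image_le
  refine le_antisymm (csSup_le ⟨S.card, hmem⟩ hub) (le_csSup ⟨S.card, hub⟩ hmem)
end

section
/- In the Global Max-Flow reduction graph (as in the previous construction) for a CNF formula with m clauses and n variables, for every clause C_i and every pair of assignments (α, β), there is at most one directed path from α to β whose internal vertices are among {c_i^{⊨⊨}, c_i^{⊨⊭}, c_i^{⊭⊨}}, and such a path exists if and only if α satisfies C_i or β satisfies C_i. -/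
attribute [local instance] Classical.propDecidable

/-- for every clause `C_i` and pair `(α, β)`, there is at most one directed
path from `α` to `β` in the reduction graph whose internal vertices are among the three
clause vertices of `C_i`, and such a path exists iff `α ⊨ C_i` or `β ⊨ C_i`. -/
theorem stmt3 {U1 U2 : Type*} [Fintype U1] [DecidableEq U1] [Fintype U2] [DecidableEq U2]
    {m : ℕ} (F : Fin m → Clause2 U1 U2) (α : U1 → Bool) (β : U2 → Bool) (i : Fin m) :
    let P : Set (List (RV U1 U2 m)) :=
      {p | IsPath (redCap F) (Sum.inl α) (Sum.inr (Sum.inl β)) p ∧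
        ∀ v ∈ p, v ≠ Sum.inl α → v ≠ Sum.inr (Sum.inl β) →
          ∃ j : Fin 3, v = Sum.inr (Sum.inr (i, j))}
    P.Subsingleton ∧ (P.Nonempty ↔ satA α (F i) ∨ satB β (F i)) := by
  intro P
  classical
  -- characterize elements of P
  have hchar : ∀ p ∈ P, ∃ j : Fin 3,
      p = [Sum.inl α, Sum.inr (Sum.inr (i, j)), Sum.inr (Sum.inl β)] ∧
      redCap F (Sum.inl α) (Sum.inr (Sum.inr (i, j))) ≠ 0 ∧
      redCap F (Sum.inr (Sum.inr (i, j))) (Sum.inr (Sum.inl β)) ≠ 0 := by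
    rintro p ⟨⟨hch, hhd, hlast⟩, hint⟩
    match p, hhd with
    | a :: q, hhd =>
      simp only [List.head?_cons, Option.some.injEq] at hhd
      subst hhd
      match q with
      | [] => simp at hlast
      | v :: r =>
        simp only [List.Chain', List.isChain_cons_cons] at hch
        obtain ⟨h1, hch⟩ := hch
        -- v must be a clause vertex of clause i
        obtain ⟨i', j⟩ : ∃ i' j, v = Sum.inr (Sum.inr (i', j)) := by
          rcases v with γ | β' | ⟨i', j⟩
          · simp [redCap] at h1
          · simp [redCap] at h1
          · exact ⟨i', j, rfl⟩
        obtain ⟨j, rfl⟩ := j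
        obtain ⟨j', hj'⟩ := hint (Sum.inr (Sum.inr (i', j))) (by simp) (by simp) (by simp)
        simp only [Sum.inr.injEq, Prod.mk.injEq] at hj'
        obtain ⟨rfl, rfl⟩ := hj'
        match r with
        | [] => simp at hlast
        | w :: r' =>
          rw [List.isChain_cons_cons] at hch
          obtain ⟨h2, hch⟩ := hch
          obtain ⟨β', rfl⟩ : ∃ β', w = Sum.inr (Sum.inl β') := by
            rcases w with γ | β' | ⟨i'', j''⟩
            · simp [redCap] at h2
            · exact ⟨β', rfl⟩
            · simp [redCap] at h2
          have hβ : β' = β := by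
            by_contra hne
            obtain ⟨j'', hj''⟩ := hint (Sum.inr (Sum.inl β')) (by simp) (by simp)
              (by simp [hne])
            simp at hj''
          subst hβ
          match r' with
          | [] => exact ⟨j, rfl, h1, h2⟩
          | u :: r'' =>
            rw [List.isChain_cons_cons] at hch
            obtain ⟨h3, -⟩ := hch
            rcases u with γ | β'' | ⟨i'', j''⟩ <;> simp [redCap] at h3
  -- the unique possible j
  have hj : ∀ j : Fin 3,
      redCap F (Sum.inl α) (Sum.inr (Sum.inr (i, j))) ≠ 0 →
      redCap F (Sum.inr (Sum.inr (i, j))) (Sum.inr (Sum.inl β)) ≠ 0 →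
      j = (if satA α (F i) then if satB β (F i) then 0 else 1 else 2) := by
    intro j h1 h2
    by_cases hA : satA α (F i) <;> by_cases hB : satB β (F i) <;>
      fin_cases j <;> simp [redCap, hA, hB, Fin.ext_iff] at h1 h2 ⊢
  constructor
  · rintro p hp q hq
    obtain ⟨j1, hp1, hp2, hp3⟩ := hchar p hp
    obtain ⟨j2, hq1, hq2, hq3⟩ := hchar q hq
    rw [hp1, hq1, hj j1 hp2 hp3, hj j2 hq2 hq3]
  · constructor
    · rintro ⟨p, hp⟩
      obtain ⟨j, -, h1, h2⟩ := hchar p hp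
      by_contra h
      push_neg at h
      obtain ⟨hA, hB⟩ := h
      fin_cases j <;> simp [redCap, hA, hB, Fin.ext_iff] at h1 h2
    · intro h
      set j : Fin 3 := if satA α (F i) then if satB β (F i) then 0 else 1 else 2 with hjdef
      have h1 : redCap F (Sum.inl α) (Sum.inr (Sum.inr (i, j))) ≠ 0 := by
        by_cases hA : satA α (F i) <;> by_cases hB : satB β (F i) <;>
          simp [redCap, hjdef, hA, hB, Fin.ext_iff]
      have h2 : redCap F (Sum.inr (Sum.inr (i, j))) (Sum.inr (Sum.inl β)) ≠ 0 := by
        by_cases hA : satA α (F i) <;> by_cases hB : satB β (F i) <;>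
          first
          | exact absurd (h.resolve_left hA) hB
          | simp [redCap, hjdef, hA, hB, Fin.ext_iff]
      refine ⟨[Sum.inl α, Sum.inr (Sum.inr (i, j)), Sum.inr (Sum.inl β)], ⟨⟨?_, rfl, rfl⟩, ?_⟩⟩
      · exact List.isChain_cons_cons.2 ⟨h1, List.isChain_cons_cons.2 ⟨h2, List.isChain_singleton _⟩⟩
      · intro v hv hv1 hv2
        simp only [List.mem_cons, List.not_mem_nil, or_false] at hv
        rcases hv with rfl | rfl | rfl
        · exact absurd rfl hv1
        · exact ⟨j, rfl⟩
        · exact absurd rfl hv2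
end

section
/- The maximum local edge connectivity of the Global Max-Flow reduction graph for a CNF formula F (maximized over pairs (α, β) with α an assignment to U_1 and β an assignment to U_2) equals the maximum number of clauses of F satisfiable by any total assignment. -/
attribute [local instance] Classical.propDecidable

section Aux

variable {U1 U2 : Type*} {m : ℕ} (F : Fin m → Clause2 U1 U2) (α : U1 → Bool) (β : U2 → Bool)

/-- The unique middle clause vertex usable for a satisfied clause. -/
noncomputable def theJ (i : Fin m) : Fin 3 :=
  if satA α (F i) then (if satB β (F i) then 0 else 1) else 2

lemma cap1_ne (i : Fin m) (hi : satA α (F i) ∨ satB β (F i)) :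
    redCap F (Sum.inl α) (Sum.inr (Sum.inr (i, theJ F α β i))) ≠ 0 := by
  have : redCap F (Sum.inl α) (Sum.inr (Sum.inr (i, theJ F α β i))) =
      (if (theJ F α β i = 0 ∨ theJ F α β i = 1) ∧ satA α (F i) then 1
      else if theJ F α β i = 2 ∧ ¬ satA α (F i) then 1 else 0) := rfl
  rw [this]
  unfold theJ
  by_cases hA : satA α (F i) <;> by_cases hB : satB β (F i) <;> simp [hA, hB] at hi ⊢

lemma cap2_ne (i : Fin m) (hi : satA α (F i) ∨ satB β (F i)) :
    redCap F (Sum.inr (Sum.inr (i, theJ F α β i))) (Sum.inr (Sum.inl β)) ≠ 0 := by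
  have : redCap F (Sum.inr (Sum.inr (i, theJ F α β i))) (Sum.inr (Sum.inl β)) =
      (if (theJ F α β i = 0 ∨ theJ F α β i = 2) ∧ satB β (F i) then 1
      else if theJ F α β i = 1 ∧ ¬ satB β (F i) then 1 else 0) := rfl
  rw [this]
  unfold theJ
  by_cases hA : satA α (F i) <;> by_cases hB : satB β (F i) <;> simp [hA, hB] at hi ⊢

lemma caps_determine (i : Fin m) (j : Fin 3)
    (h1 : redCap F (Sum.inl α) (Sum.inr (Sum.inr (i, j))) ≠ 0)
    (h2 : redCap F (Sum.inr (Sum.inr (i, j))) (Sum.inr (Sum.inl β)) ≠ 0) :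
    (satA α (F i) ∨ satB β (F i)) ∧ j = theJ F α β i := by
  have e1 : redCap F (Sum.inl α) (Sum.inr (Sum.inr (i, j))) =
      (if (j = 0 ∨ j = 1) ∧ satA α (F i) then 1
      else if j = 2 ∧ ¬ satA α (F i) then 1 else 0) := rfl
  have e2 : redCap F (Sum.inr (Sum.inr (i, j))) (Sum.inr (Sum.inl β)) =
      (if (j = 0 ∨ j = 2) ∧ satB β (F i) then 1
      else if j = 1 ∧ ¬ satB β (F i) then 1 else 0) := rfl
  rw [e1] at h1; rw [e2] at h2
  unfold theJ
  by_cases hA : satA α (F i) <;> by_cases hB : satB β (F i) <;>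
    simp [hA, hB] at h1 h2 ⊢
  · by_cases hj : j = 0
    · exact hj
    · have a := h1 hj; have b := h2 hj; rw [a] at b; exact absurd b (by decide)
  · exact h2
  · exact h1
  · rw [h1] at h2; exact absurd h2 (by decide)

/-- Every `s`-`t` path in the reduction graph has the form `[s, c, t]`. -/
lemma path_shape {p : List (RV U1 U2 m)}
    (hp : IsPath (redCap F) (Sum.inl α) (Sum.inr (Sum.inl β)) p) :
    ∃ i : Fin m, (satA α (F i) ∨ satB β (F i)) ∧
      p = [Sum.inl α, Sum.inr (Sum.inr (i, theJ F α β i)), Sum.inr (Sum.inl β)] := by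
  obtain ⟨hc, hh, hl⟩ := hp
  rcases p with _ | ⟨a, _ | ⟨b, _ | ⟨c, _ | ⟨d, l3⟩⟩⟩⟩
  · simp at hh
  · simp at hh hl; rw [hh] at hl; exact absurd hl (by simp)
  · have ha : a = Sum.inl α := by simpa using hh
    have hb : b = Sum.inr (Sum.inl β) := by simpa using hl
    subst ha; subst hb
    have hab : redCap F (Sum.inl α) (Sum.inr (Sum.inl β)) ≠ 0 :=
      (List.isChain_cons_cons.mp hc).1
    exact absurd rfl hab
  · have ha : a = Sum.inl α := by simpa using hh
    have hcc : c = Sum.inr (Sum.inl β) := by simpa using hl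
    subst ha; subst hcc
    have hab : redCap F (Sum.inl α) b ≠ 0 := (List.isChain_cons_cons.mp hc).1
    have hbc : redCap F b (Sum.inr (Sum.inl β)) ≠ 0 :=
      (List.isChain_cons_cons.mp (List.isChain_cons_cons.mp hc).2).1
    rcases b with α' | b'
    · exact absurd rfl hab
    rcases b' with β' | ⟨i, j⟩
    · exact absurd rfl hab
    obtain ⟨hsat, hj⟩ := caps_determine F α β i j hab hbc
    exact ⟨i, hsat, by rw [hj]⟩
  · have ha : a = Sum.inl α := by simpa using hh
    subst ha
    have hab : redCap F (Sum.inl α) b ≠ 0 := (List.isChain_cons_cons.mp hc).1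
    have h2 := (List.isChain_cons_cons.mp hc).2
    have hbc : redCap F b c ≠ 0 := (List.isChain_cons_cons.mp h2).1
    have h3 := (List.isChain_cons_cons.mp h2).2
    have hcd : redCap F c d ≠ 0 := (List.isChain_cons_cons.mp h3).1
    rcases b with α' | b'
    · exact absurd rfl hab
    rcases b' with β' | ⟨i, j⟩
    · exact absurd rfl hab
    rcases c with α'' | c'
    · exact absurd rfl hbc
    rcases c' with β'' | ⟨i', j'⟩
    · exact absurd rfl hcd
    · exact absurd rfl hbc

lemma edge_count (k : ℕ)
    (hk : ∃ ps : List (List (RV U1 U2 m)), ps.length = k ∧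
      (∀ p ∈ ps, IsPath (redCap F) (Sum.inl α) (Sum.inr (Sum.inl β)) p ∧ (pathEdges p).Nodup) ∧
      ps.Pairwise (fun p q => ∀ e ∈ pathEdges p, e ∉ pathEdges q)) :
    k ≤ (Finset.univ.filter fun i => satA α (F i) ∨ satB β (F i)).card := by
  classical
  obtain ⟨ps, hlen, hpath, hpw⟩ := hk
  -- middles of the paths are distinct
  have hshape : ∀ p ∈ ps, ∃ i : Fin m, (satA α (F i) ∨ satB β (F i)) ∧
      p = [Sum.inl α, Sum.inr (Sum.inr (i, theJ F α β i)), Sum.inr (Sum.inl β)] :=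
    fun p hp => path_shape F α β (hpath p hp).1
  have hpw2 : ps.Pairwise (fun p q => p.tail.head? ≠ q.tail.head?) := by
    refine hpw.imp_of_mem ?_
    intro p q hp hq hdisj heq
    obtain ⟨i, _, rfl⟩ := hshape p hp
    obtain ⟨i', _, rfl⟩ := hshape q hq
    simp at heq
    obtain ⟨rfl, -⟩ := heq
    exact hdisj (Sum.inl α, Sum.inr (Sum.inr (i, theJ F α β i)))
      (by simp [pathEdges]) (by simp [pathEdges])
  set qs := ps.map (fun p => p.tail.head?) with hqs
  have hnd : qs.Nodup := List.pairwise_map.mpr hpw2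
  have hsub : qs.toFinset ⊆ (Finset.univ.filter fun i => satA α (F i) ∨ satB β (F i)).image
      (fun i => (some (Sum.inr (Sum.inr (i, theJ F α β i))) : Option (RV U1 U2 m))) := by
    intro q hq
    rw [List.mem_toFinset] at hq
    obtain ⟨p, hp, rfl⟩ := List.mem_map.mp hq
    obtain ⟨i, hi, rfl⟩ := hshape p hp
    exact Finset.mem_image.mpr ⟨i, by simpa using hi, by simp⟩
  calc k = qs.length := by simp [hqs, hlen]
    _ = qs.toFinset.card := (List.toFinset_card_of_nodup hnd).symm
    _ ≤ _ := Finset.card_le_card hsub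
    _ ≤ _ := Finset.card_image_le

lemma edp_eq :
    maxEDP (redCap F) (Sum.inl α) (Sum.inr (Sum.inl β)) =
      (Finset.univ.filter fun i => satA α (F i) ∨ satB β (F i)).card := by
  classical
  set S := (Finset.univ.filter fun i => satA α (F i) ∨ satB β (F i)) with hS
  set s : RV U1 U2 m := Sum.inl α
  set t : RV U1 U2 m := Sum.inr (Sum.inl β)
  have hmem : S.card ∈ {k : ℕ | ∃ ps : List (List (RV U1 U2 m)), ps.length = k ∧
      (∀ p ∈ ps, IsPath (redCap F) s t p ∧ (pathEdges p).Nodup) ∧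
      ps.Pairwise (fun p q => ∀ e ∈ pathEdges p, e ∉ pathEdges q)} := by
    refine ⟨S.toList.map (fun i => [s, Sum.inr (Sum.inr (i, theJ F α β i)), t]), ?_, ?_, ?_⟩
    · simp
    · intro p hp
      obtain ⟨i, hi, rfl⟩ := List.mem_map.mp hp
      rw [Finset.mem_toList, hS, Finset.mem_filter] at hi
      refine ⟨⟨?_, rfl, rfl⟩, ?_⟩
      · exact List.isChain_cons_cons.mpr ⟨cap1_ne F α β i hi.2,
          List.isChain_cons_cons.mpr ⟨cap2_ne F α β i hi.2, List.isChain_singleton _⟩⟩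
      · simp [pathEdges, s, t]
    · rw [List.pairwise_map]
      refine (S.nodup_toList).imp_of_mem ?_
      intro i i' _ _ hne e he he'
      simp [pathEdges, s, t] at he he'
      rcases he with he | he <;> rcases he' with he' | he' <;>
        simp [he, he', Prod.ext_iff, s, t] at * <;> simp_all
  have hub : ∀ k ∈ {k : ℕ | ∃ ps : List (List (RV U1 U2 m)), ps.length = k ∧
      (∀ p ∈ ps, IsPath (redCap F) s t p ∧ (pathEdges p).Nodup) ∧
      ps.Pairwise (fun p q => ∀ e ∈ pathEdges p, e ∉ pathEdges q)}, k ≤ S.card :=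
    fun k hk => edge_count F α β k hk
  unfold maxEDP
  exact le_antisymm (csSup_le ⟨S.card, hmem⟩ hub)
    (le_csSup ⟨S.card, hub⟩ hmem)

end Aux


/-- the maximum local edge connectivity of the reduction graph, maximized
over pairs `(α, β)` of assignments to `U1` and `U2`, equals the maximum number of
clauses of `F` satisfiable by any total assignment (i.e. by any pair `(α, β)`). -/
theorem stmt4 {U1 U2 : Type*} [Fintype U1] [DecidableEq U1] [Fintype U2] [DecidableEq U2]
    {m : ℕ} (F : Fin m → Clause2 U1 U2) :
    (⨆ α : U1 → Bool, ⨆ β : U2 → Bool,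
        maxEDP (redCap F) (Sum.inl α) (Sum.inr (Sum.inl β))) =
      ⨆ α : U1 → Bool, ⨆ β : U2 → Bool,
        (Finset.univ.filter fun i => satA α (F i) ∨ satB β (F i)).card := by
  exact iSup_congr fun α => iSup_congr fun β => edp_eq F α β
end

section
/- Consider the capacitated reduction gadget for a fixed triple of partial assignments (α, β, γ) and CNF clauses C_1, ..., C_m, where the subgraph restricted to β consists of: vertex α; for each i, vertices C_i^⊨, C_i^⊭ in a clause layer; vertices β_i^l, β_i^c, β_i^r for each i; vertex β'; vertex v_B; vertex γ; with edges: (α, C_i^⊨) of capacity w if α ⊨ C_i, else (α, C_i^⊭) of capacity w; (C_i^⊨, β_i^c) capacity 1; (C_i^⊭, β_i^l) capacity 1; (β_i^l, β_i^r) capacity 1 present iff β ⊭ C_i; (β_i^l, β_i^c) capacity 1; (β_i^c, β') capacity 1; (β_i^r, C_i) capacity 1; (C_i, γ) of capacity w present iff γ ⊭ C_i; (β', v_B) capacity p−1; (v_B, γ) capacity w(p−1). If the triple (α, β, γ) satisfies at most p−1 clauses (i.e., at least m−p+1 clauses are unsatisfied by all three), then the maximum α-γ flow in this gadget is at least m.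 -/
attribute [local instance] Classical.propDecidable

/-- A CNF clause over variables `U1 ⊕ U2 ⊕ U3`. -/
abbrev Clause3 (U1 U2 U3 : Type*) := Finset ((U1 ⊕ U2 ⊕ U3) × Bool)

/-- The assignment `a` to `U1` satisfies the clause `C`. -/
def sat3A {U1 U2 U3 : Type*} (a : U1 → Bool) (C : Clause3 U1 U2 U3) : Prop :=
  ∃ l ∈ C, ∃ x : U1, l.1 = Sum.inl x ∧ a x = l.2

/-- The assignment `b` to `U2` satisfies the clause `C`. -/
def sat3B {U1 U2 U3 : Type*} (b : U2 → Bool) (C : Clause3 U1 U2 U3) : Prop :=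
  ∃ l ∈ C, ∃ x : U2, l.1 = Sum.inr (Sum.inl x) ∧ b x = l.2

/-- The assignment `g` to `U3` satisfies the clause `C`. -/
def sat3G {U1 U2 U3 : Type*} (g : U3 → Bool) (C : Clause3 U1 U2 U3) : Prop :=
  ∃ l ∈ C, ∃ x : U3, l.1 = Sum.inr (Sum.inr x) ∧ g x = l.2

/-- Vertices of the capacitated reduction gadget (for a fixed triple `(α, β, γ)`). -/
inductive GadV (m : ℕ) where
  | src                 -- α
  | snk                 -- γ
  | vB                  -- v_B
  | bp                  -- β'
  | Csat (i : Fin m)    -- C_i^⊨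
  | Cun (i : Fin m)     -- C_i^⊭
  | Cb (i : Fin m)      -- C_i
  | bl (i : Fin m)      -- β_i^l
  | bc (i : Fin m)      -- β_i^c
  | br (i : Fin m)      -- β_i^r
  deriving DecidableEq, Fintype

/-- Capacities of the gadget, where `sA i`, `sB i`, `sG i` mean `α ⊨ C_i`, `β ⊨ C_i`,
`γ ⊨ C_i` respectively, `w` is the capacity parameter and `p` the threshold. -/
noncomputable def gcap {m : ℕ} (sA sB sG : Fin m → Prop) (w p : ℕ) : GadV m → GadV m → ℕ
  | .src, .Csat i => if sA i then w else 0
  | .src, .Cun i => if sA i then 0 else w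
  | .Csat i, .bc j => if i = j then 1 else 0
  | .Cun i, .bl j => if i = j then 1 else 0
  | .bl i, .br j => if i = j ∧ ¬ sB i then 1 else 0
  | .bl i, .bc j => if i = j then 1 else 0
  | .bc _, .bp => 1
  | .br i, .Cb j => if i = j then 1 else 0
  | .Cb i, .snk => if ¬ sG i then w else 0
  | .bp, .vB => p - 1
  | .vB, .snk => w * (p - 1)
  | _, _ => 0

/-- Equivalence of gadget vertices with a sum type, for sum decomposition. -/
def gadEquiv (m : ℕ) : GadV m ≃
    (Unit ⊕ Unit ⊕ Unit ⊕ Unit ⊕ Fin m ⊕ Fin m ⊕ Fin m ⊕ Fin m ⊕ Fin m ⊕ Fin m) where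
  toFun v := match v with
    | .src => Sum.inl ()
    | .snk => Sum.inr (Sum.inl ())
    | .vB => Sum.inr (Sum.inr (Sum.inl ()))
    | .bp => Sum.inr (Sum.inr (Sum.inr (Sum.inl ())))
    | .Csat i => Sum.inr (Sum.inr (Sum.inr (Sum.inr (Sum.inl i))))
    | .Cun i => Sum.inr (Sum.inr (Sum.inr (Sum.inr (Sum.inr (Sum.inl i)))))
    | .Cb i => Sum.inr (Sum.inr (Sum.inr (Sum.inr (Sum.inr (Sum.inr (Sum.inl i))))))
    | .bl i => Sum.inr (Sum.inr (Sum.inr (Sum.inr (Sum.inr (Sum.inr (Sum.inr (Sum.inl i)))))))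
    | .bc i => Sum.inr (Sum.inr (Sum.inr (Sum.inr (Sum.inr (Sum.inr (Sum.inr (Sum.inr (Sum.inl i))))))))
    | .br i => Sum.inr (Sum.inr (Sum.inr (Sum.inr (Sum.inr (Sum.inr (Sum.inr (Sum.inr (Sum.inr i))))))))
  invFun t := match t with
    | Sum.inl () => .src
    | Sum.inr (Sum.inl ()) => .snk
    | Sum.inr (Sum.inr (Sum.inl ())) => .vB
    | Sum.inr (Sum.inr (Sum.inr (Sum.inl ()))) => .bp
    | Sum.inr (Sum.inr (Sum.inr (Sum.inr (Sum.inl i)))) => .Csat i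
    | Sum.inr (Sum.inr (Sum.inr (Sum.inr (Sum.inr (Sum.inl i))))) => .Cun i
    | Sum.inr (Sum.inr (Sum.inr (Sum.inr (Sum.inr (Sum.inr (Sum.inl i)))))) => .Cb i
    | Sum.inr (Sum.inr (Sum.inr (Sum.inr (Sum.inr (Sum.inr (Sum.inr (Sum.inl i))))))) => .bl i
    | Sum.inr (Sum.inr (Sum.inr (Sum.inr (Sum.inr (Sum.inr (Sum.inr (Sum.inr (Sum.inl i)))))))) => .bc i
    | Sum.inr (Sum.inr (Sum.inr (Sum.inr (Sum.inr (Sum.inr (Sum.inr (Sum.inr (Sum.inr i)))))))) => .br i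
  left_inv v := by cases v <;> rfl
  right_inv t := by
    rcases t with ⟨⟩|⟨⟩|⟨⟩|⟨⟩|i|i|i|i|i|i <;> rfl

lemma gadv_sum {m : ℕ} (h : GadV m → ℕ) :
    ∑ v, h v = h .src + h .snk + h .vB + h .bp + ∑ i, h (.Csat i) + ∑ i, h (.Cun i)
      + ∑ i, h (.Cb i) + ∑ i, h (.bl i) + ∑ i, h (.bc i) + ∑ i, h (.br i) := by
  rw [← Equiv.sum_comp (gadEquiv m).symm h]
  simp [Fintype.sum_sum_type, gadEquiv, add_assoc]

/-- The explicit flow of value `m`. -/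
noncomputable def gflow {m : ℕ} (sA sB sG : Fin m → Prop) : GadV m → GadV m → ℕ
  | .src, .Csat i => if sA i then 1 else 0
  | .src, .Cun i => if sA i then 0 else 1
  | .Csat i, .bc j => if i = j then (if sA i then 1 else 0) else 0
  | .Cun i, .bl j => if i = j then (if sA i then 0 else 1) else 0
  | .bl i, .br j => if i = j then (if ¬ sA i ∧ ¬ sB i ∧ ¬ sG i then 1 else 0) else 0
  | .bl i, .bc j => if i = j then (if ¬ sA i ∧ (sB i ∨ sG i) then 1 else 0) else 0
  | .bc i, .bp => if sA i ∨ sB i ∨ sG i then 1 else 0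
  | .br i, .Cb j => if i = j then (if ¬ sA i ∧ ¬ sB i ∧ ¬ sG i then 1 else 0) else 0
  | .Cb i, .snk => if ¬ sA i ∧ ¬ sB i ∧ ¬ sG i then 1 else 0
  | .bp, .vB => (Finset.univ.filter fun i => sA i ∨ sB i ∨ sG i).card
  | .vB, .snk => (Finset.univ.filter fun i => sA i ∨ sB i ∨ sG i).card
  | _, _ => 0
/-- if the triple `(α, β, γ)` satisfies at most `p - 1` of the `m` clauses,
then the maximum `α`-`γ` flow in the capacitated gadget is at least `m`. -/
theorem stmt6 {U1 U2 U3 : Type*} {m : ℕ} (F : Fin m → Clause3 U1 U2 U3)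
    (a : U1 → Bool) (b : U2 → Bool) (g : U3 → Bool) (w p : ℕ)
    (hw : 1 ≤ w) (hp1 : 1 ≤ p) (hpm : p ≤ m)
    (hsat : (Finset.univ.filter fun i =>
        sat3A a (F i) ∨ sat3B b (F i) ∨ sat3G g (F i)).card ≤ p - 1) :
    m ≤ maxFlow
        (gcap (fun i => sat3A a (F i)) (fun i => sat3B b (F i)) (fun i => sat3G g (F i)) w p)
        GadV.src GadV.snk := by
  classical
  set cap := gcap (fun i => sat3A a (F i)) (fun i => sat3B b (F i)) (fun i => sat3G g (F i)) w p with hcap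
  set f := gflow (fun i => sat3A a (F i)) (fun i => sat3B b (F i)) (fun i => sat3G g (F i)) with hf
  have hsat' : (Finset.univ.filter fun i =>
      sat3A a (F i) ∨ sat3B b (F i) ∨ sat3G g (F i)).card ≤ p - 1 := hsat
  have hflow : IsFlow cap GadV.src GadV.snk f := by
    constructor
    · intro u v
      cases u <;> cases v <;>
        simp only [hcap, hf, gflow, gcap] <;>
        first
          | omega
          | exact hsat'
          | exact hsat'.trans (Nat.le_mul_of_pos_left _ hw)
          | (split_ifs <;> first | omega | (exfalso; tauto))
    · intro v hs ht
      cases v with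
      | src => exact absurd rfl hs
      | snk => exact absurd rfl ht
      | _ =>
        rw [gadv_sum, gadv_sum] <;>
        simp only [hf, gflow, Finset.sum_ite_eq, Finset.sum_ite_eq', Finset.mem_univ, if_true,
          Finset.sum_const_zero, Finset.card_filter, add_zero, zero_add] <;>
        first
          | rfl
          | (split_ifs <;> first | rfl | omega | (exfalso; tauto))
  have hval : ∑ v, f GadV.src v = m + ∑ v, f v GadV.src := by
    have h1 : ∑ v, f v GadV.src = 0 := by
      rw [gadv_sum]; simp [hf, gflow]
    have h2 : ∑ v, f GadV.src v = m := by
      rw [gadv_sum]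
      simp only [hf, gflow, Finset.sum_const_zero, add_zero, zero_add]
      have key : ∀ i : Fin m, (if sat3A a (F i) then (1:ℕ) else 0)
          + (if sat3A a (F i) then (0:ℕ) else 1) = 1 := by
        intro i; split_ifs <;> rfl
      rw [← Finset.sum_add_distrib, Finset.sum_congr rfl fun i _ => key i]
      simp
    rw [h1, h2, add_zero]
  have hmem : m ∈ {x : ℕ | ∃ f, IsFlow cap GadV.src GadV.snk f
      ∧ ∑ v, f GadV.src v = x + ∑ v, f v GadV.src} := ⟨f, hflow, hval⟩
  have hbdd : BddAbove {x : ℕ | ∃ f, IsFlow cap GadV.src GadV.snk f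
      ∧ ∑ v, f GadV.src v = x + ∑ v, f v GadV.src} := by
    refine ⟨∑ v, cap GadV.src v, ?_⟩
    rintro x ⟨f', hf', hval'⟩
    calc x ≤ x + ∑ v, f' v GadV.src := Nat.le_add_right _ _
      _ = ∑ v, f' GadV.src v := hval'.symm
      _ ≤ ∑ v, cap GadV.src v := Finset.sum_le_sum fun v _ => hf'.1 GadV.src v
  exact le_csSup hbdd hmem
end

section
/- In the uncapacitated reduction gadget G_p^{α,β,γ}: vertices are α; β_i^l, β_i^r for i ∈ [m]; β'; β'_j for j ∈ [p−1]; and γ; with unit-capacity edges: (α, β_i^l) present iff both α ⊭ C_i and β ⊭ C_i; (α, β_i^r) present iff α ⊨ C_i or β ⊨ C_i; (β_i^l, γ) present iff additionally γ ⊭ C_i (as well as the (α, β_i^l)-condition); (β_i^l, β_i^r) for all i; (β_i^r, β') for all i; (β', β'_j) for all j ∈ [p−1]; (β'_j, γ) for all j ∈ [p−1]. If the combined assignment (α, β, γ) satisfies at least p clauses, then the maximum α-γ flow in G_p^{α,β,γ} is at most m − 1. -/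
attribute [local instance] Classical.propDecidable

/-- Vertices of the uncapacitated reduction gadget `G_p^{α,β,γ}`. -/
inductive UGadV (m p : ℕ) where
  | src                    -- α
  | snk                    -- γ
  | bp                     -- β'
  | bl (i : Fin m)         -- β_i^l
  | br (i : Fin m)         -- β_i^r
  | bpj (j : Fin (p - 1))  -- β'_j
  deriving DecidableEq, Fintype

/-- Unit-capacity edges of `G_p^{α,β,γ}`, with `sA i`, `sB i`, `sG i` meaning
`α ⊨ C_i`, `β ⊨ C_i`, `γ ⊨ C_i`. -/
noncomputable def ucap {m p : ℕ} (sA sB sG : Fin m → Prop) : UGadV m p → UGadV m p → ℕ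
  | .src, .bl i => if ¬ sA i ∧ ¬ sB i then 1 else 0
  | .src, .br i => if sA i ∨ sB i then 1 else 0
  | .bl i, .snk => if ¬ sA i ∧ ¬ sB i ∧ ¬ sG i then 1 else 0
  | .bl i, .br j => if i = j then 1 else 0
  | .br _, .bp => 1
  | .bp, .bpj _ => 1
  | .bpj _, .snk => 1
  | _, _ => 0

/-- Explicit equivalence describing the vertex set of the gadget. -/
def ugadEquiv (m p : ℕ) :
    (Unit ⊕ Unit ⊕ Unit ⊕ Fin m ⊕ Fin m ⊕ Fin (p - 1)) ≃ UGadV m p where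
  toFun x := match x with
    | .inl _ => .src
    | .inr (.inl _) => .snk
    | .inr (.inr (.inl _)) => .bp
    | .inr (.inr (.inr (.inl i))) => .bl i
    | .inr (.inr (.inr (.inr (.inl i)))) => .br i
    | .inr (.inr (.inr (.inr (.inr j)))) => .bpj j
  invFun v := match v with
    | .src => .inl ()
    | .snk => .inr (.inl ())
    | .bp => .inr (.inr (.inl ()))
    | .bl i => .inr (.inr (.inr (.inl i)))
    | .br i => .inr (.inr (.inr (.inr (.inl i))))
    | .bpj j => .inr (.inr (.inr (.inr (.inr j))))
  left_inv x := by rcases x with _ | _ | _ | _ | _ | _ <;> rfl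
  right_inv v := by cases v <;> rfl

lemma ugad_sum {m p : ℕ} {M : Type*} [AddCommMonoid M] (h : UGadV m p → M) :
    ∑ v, h v =
      h .src + h .snk + h .bp + (∑ i, h (.bl i)) + (∑ i, h (.br i)) + ∑ j, h (.bpj j) := by
  rw [← Equiv.sum_comp (ugadEquiv m p) h]
  simp [Fintype.sum_sum_type, ugadEquiv]
  abel


lemma unsat_sum_le {m p : ℕ} (sA sB sG : Fin m → Prop)
    (h : p ≤ (Finset.univ.filter fun i => sA i ∨ sB i ∨ sG i).card) :
    (∑ i, if ¬ sA i ∧ ¬ sB i ∧ ¬ sG i then 1 else 0) ≤ m - p := by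
  have h1 : (∑ i, if ¬ sA i ∧ ¬ sB i ∧ ¬ sG i then 1 else 0)
      = (Finset.univ.filter fun i => ¬ sA i ∧ ¬ sB i ∧ ¬ sG i).card := by
    rw [Finset.card_filter]
  have h2 : (Finset.univ.filter fun i => ¬ sA i ∧ ¬ sB i ∧ ¬ sG i)
      = Finset.univ.filter fun i => ¬ (sA i ∨ sB i ∨ sG i) := by
    ext i
    simp only [Finset.mem_filter, Finset.mem_univ, true_and]
    tauto
  have h3 := Finset.card_filter_add_card_filter_not
    (s := (Finset.univ : Finset (Fin m))) (p := fun i => sA i ∨ sB i ∨ sG i)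
  rw [Finset.card_univ, Fintype.card_fin] at h3
  rw [h1, h2]
  omega

/-- if the combined assignment `(α, β, γ)` satisfies at least `p` of the
`m` clauses, then the maximum `α`-`γ` flow in `G_p^{α,β,γ}` is at most `m - 1`. -/
theorem stmt7 {U1 U2 U3 : Type*} {m : ℕ} (F : Fin m → Clause3 U1 U2 U3)
    (a : U1 → Bool) (b : U2 → Bool) (g : U3 → Bool) (p : ℕ)
    (hp1 : 1 ≤ p) (hpm : p ≤ m)
    (hsat : p ≤ (Finset.univ.filter fun i =>
        sat3A a (F i) ∨ sat3B b (F i) ∨ sat3G g (F i)).card) :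
    maxFlow
        (ucap (m := m) (p := p) (fun i => sat3A a (F i)) (fun i => sat3B b (F i))
          (fun i => sat3G g (F i)))
        UGadV.src UGadV.snk ≤ m - 1 := by
  set sA : Fin m → Prop := fun i => sat3A a (F i) with hsA
  set sB : Fin m → Prop := fun i => sat3B b (F i) with hsB
  set sG : Fin m → Prop := fun i => sat3G g (F i) with hsG
  set cap := ucap (m := m) (p := p) sA sB sG with hcapdef
  apply csSup_le'
  rintro x ⟨f, ⟨hfc, hcons⟩, hval⟩
  -- global conservation
  have h1 : ∑ v, ∑ u, f u v = ∑ v, ∑ u, f v u := Finset.sum_comm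
  set A : UGadV m p → ℕ := fun v => ∑ u, f u v with hA
  set B : UGadV m p → ℕ := fun v => ∑ u, f v u with hB
  have h2 : ∀ v : UGadV m p, v ≠ .src → v ≠ .snk → A v = B v := hcons
  have hsplitA := ugad_sum (m := m) (p := p) A
  have hsplitB := ugad_sum (m := m) (p := p) B
  have hblAB : ∑ i, A (.bl i) = ∑ i, B (.bl i) :=
    Finset.sum_congr rfl fun i _ => h2 _ (by simp) (by simp)
  have hbrAB : ∑ i, A (.br i) = ∑ i, B (.br i) :=
    Finset.sum_congr rfl fun i _ => h2 _ (by simp) (by simp)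
  have hbpjAB : ∑ j, A (.bpj j) = ∑ j, B (.bpj j) :=
    Finset.sum_congr rfl fun j _ => h2 _ (by simp) (by simp)
  have hbpAB : A .bp = B .bp := h2 _ (by simp) (by simp)
  have hkey : A UGadV.src + A UGadV.snk = B UGadV.src + B UGadV.snk := by
    rw [hsplitA, hsplitB] at h1
    omega
  have hvx : B UGadV.src = x + A UGadV.src := hval
  have hxle : x ≤ A UGadV.snk := by omega
  -- capacity bound at the sink
  have hAcap : A UGadV.snk ≤ ∑ u, cap u UGadV.snk :=
    Finset.sum_le_sum fun u _ => hfc u _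
  have hcapval : ∑ u, cap u UGadV.snk =
      (∑ i, if ¬ sA i ∧ ¬ sB i ∧ ¬ sG i then 1 else 0) + (p - 1) := by
    rw [ugad_sum (fun u => cap u UGadV.snk)]
    simp [hcapdef, ucap]
  have hbound := unsat_sum_le (p := p) sA sB sG hsat
  omega
end

section
/- Let F be a CNF formula and suppose for each p ∈ [m] we have a graph G_p and a designated pair set P such that: (i) if some total assignment satisfies at least p clauses then some pair in P has max flow at most K − 1 in G_p, and (ii) if every total assignment satisfies at most p − 1 clauses then every pair in P has max flow at least K in G_p. Then the maximum number of simultaneously satisfiable clauses of F equals the largest p ∈ [m] such that some pair in P has max flow at most K − 1 in G_p (and equals 0 if no such p exists). -/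
attribute [local instance] Classical.propDecidable

/-- suppose for each `p ∈ [m]` there is a graph `G_p` (capacities
`cap p`) and a designated pair set `P` such that (i) if some total assignment satisfies
at least `p` clauses then some pair in `P` has max flow at most `K − 1` in `G_p`, and
(ii) if every total assignment satisfies at most `p − 1` clauses then every pair in `P`
has max flow at least `K` in `G_p`. Then the maximum number of simultaneously
satisfiable clauses equals the largest `p ∈ [m]` for which some pair in `P` has max
flow at most `K − 1` in `G_p` (and `0` if no such `p` exists). -/
theorem stmt14 {V A : Type*} [Fintype V] [Fintype A] [Nonempty A]
    (m K : ℕ) (hK : 1 ≤ K)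
    (cap : ℕ → V → V → ℕ) (P : Finset (V × V))
    (satCount : A → ℕ) (hm : ∀ a, satCount a ≤ m)
    (h1 : ∀ p ∈ Finset.Icc 1 m, (∃ a, p ≤ satCount a) →
      ∃ q ∈ P, maxFlow (cap p) q.1 q.2 ≤ K - 1)
    (h2 : ∀ p ∈ Finset.Icc 1 m, (∀ a, satCount a ≤ p - 1) →
      ∀ q ∈ P, K ≤ maxFlow (cap p) q.1 q.2) :
    (⨆ a, satCount a) =
      sSup {p : ℕ | p ∈ Finset.Icc 1 m ∧ ∃ q ∈ P, maxFlow (cap p) q.1 q.2 ≤ K - 1} := by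

  classical
  set M := ⨆ a, satCount a with hMdef
  have hbdd : BddAbove (Set.range satCount) := Set.Finite.bddAbove (Set.finite_range _)
  have hMle : M ≤ m := ciSup_le hm
  have hex : ∃ a, satCount a = M := by
    obtain ⟨a, ha⟩ := Finite.exists_max satCount
    exact ⟨a, le_antisymm (le_ciSup hbdd a) (ciSup_le ha)⟩
  set S := {p : ℕ | p ∈ Finset.Icc 1 m ∧ ∃ q ∈ P, maxFlow (cap p) q.1 q.2 ≤ K - 1} with hSdef
  have hSle : ∀ p ∈ S, p ≤ M := by
    intro p hp
    by_contra hlt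
    push_neg at hlt
    obtain ⟨hpIcc, q, hqP, hqflow⟩ := hp
    have hall : ∀ a, satCount a ≤ p - 1 := by
      intro a
      have h3 : satCount a ≤ M := le_ciSup hbdd a
      omega
    have := h2 p hpIcc hall q hqP
    omega
  rcases Nat.eq_zero_or_pos M with h0 | hpos
  · have hempty : S = ∅ := by
      ext p
      simp only [Set.mem_empty_iff_false, iff_false]
      intro hp
      have h1' := hp.1
      have := hSle p hp
      simp [Finset.mem_Icc] at h1'
      omega
    rw [h0, hSdef] at *
    rw [hempty]
    simp
  · have hMmem : M ∈ S := by
      refine ⟨Finset.mem_Icc.mpr ⟨hpos, hMle⟩, ?_⟩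
      obtain ⟨a, ha⟩ := hex
      exact h1 M (Finset.mem_Icc.mpr ⟨hpos, hMle⟩) ⟨a, ha.ge⟩
    exact le_antisymm (le_csSup ⟨M, hSle⟩ hMmem) (csSup_le ⟨M, hMmem⟩ hSle)
end
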